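/- In the Euclidean plane, no point x can have five distinct 'proper children' in its nearest neighbour graph: there do not exist distinct points x, x₁, ..., x₅ such that for each i, x is the unique nearest neighbour of xᵢ, and x's own nearest neighbour is distinct from each xᵢ. -/

import Mathlib

open Real

/-- Law of cosines consequence: if the angle at the apex is at most `π/3`
(expressed via the inner product) and `‖v‖ < ‖w‖`, the opposite side is
shorter than the longer adjacent side. -/
lemma aux_tri {F : Type*} [NormedAddCommGroup F] [InnerProductSpace ℝ F]
    (v w : F) (hv : 0 < ‖v‖) (h : ‖v‖ * ‖w‖ ≤ 2 * (inner ℝ v w : ℝ)) (hlt : ‖v‖ < ‖w‖) :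
    ‖w - v‖ < ‖w‖ := by
  have h2 : ‖w - v‖ ^ 2 < ‖w‖ ^ 2 := by
    have e := norm_sub_sq_real w v
    have hcomm : (inner ℝ v w : ℝ) = inner ℝ w v := (real_inner_comm w v)
    nlinarith [mul_lt_mul_of_pos_left hlt hv]
  exact lt_of_pow_lt_pow_left₀ 2 (norm_nonneg w) h2

/-- Of six angles in `(-π, π]`, two differ (mod `2π`) by at most `π/3`. -/
lemma aux_pigeon (θ : Fin 6 → ℝ) (hθ : ∀ i, θ i ∈ Set.Ioc (-π) π) :
    ∃ i j, i ≠ j ∧ (1:ℝ)/2 ≤ Real.cos (θ i - θ j) := by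
  by_contra hcon
  push_neg at hcon
  have key : ∀ i j, i ≠ j → π/3 < |θ i - θ j| ∧ |θ i - θ j| < 5*π/3 := by
    intro i j hij
    have hd2 : |θ i - θ j| < 2*π := by
      have h1 := hθ i; have h2 := hθ j
      rw [abs_lt]; constructor <;> [nlinarith [h1.1, h2.2]; nlinarith [h1.2, h2.1]]
    constructor
    · by_contra hle
      push_neg at hle
      have : (1:ℝ)/2 ≤ Real.cos (θ i - θ j) := by
        rw [← Real.cos_abs, ← Real.cos_pi_div_three]
        exact Real.cos_le_cos_of_nonneg_of_le_pi (abs_nonneg _)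
          (by linarith [Real.pi_pos]) hle
      exact absurd this (not_le.mpr (hcon i j hij))
    · by_contra hle
      push_neg at hle
      have : (1:ℝ)/2 ≤ Real.cos (θ i - θ j) := by
        rw [← Real.cos_abs, show |θ i - θ j| = 2*π - (2*π - |θ i - θ j|) by ring,
          Real.cos_two_pi_sub, ← Real.cos_pi_div_three]
        exact Real.cos_le_cos_of_nonneg_of_le_pi (by linarith)
          (by linarith [Real.pi_pos]) (by linarith)
      exact absurd this (not_le.mpr (hcon i j hij))
  set g : Fin 6 → ℝ := θ ∘ (Tuple.sort θ) with hg
  have hmono : Monotone g := Tuple.monotone_sort θ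
  have hkey' : ∀ i j : Fin 6, i < j → π/3 < g j - g i ∧ g j - g i < 5*π/3 := by
    intro i j hij
    have hne : (Tuple.sort θ) i ≠ (Tuple.sort θ) j :=
      fun h => hij.ne (Equiv.injective _ h)
    obtain ⟨h1, h2⟩ := key _ _ hne
    have hle : g i ≤ g j := hmono hij.le
    rw [show θ ((Tuple.sort θ) i) = g i from rfl, show θ ((Tuple.sort θ) j) = g j from rfl] at h1 h2
    rw [abs_sub_comm, abs_of_nonneg (by linarith)] at h1 h2
    exact ⟨h1, h2⟩
  have h01 := hkey' 0 1 (by decide)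
  have h12 := hkey' 1 2 (by decide)
  have h23 := hkey' 2 3 (by decide)
  have h34 := hkey' 3 4 (by decide)
  have h45 := hkey' 4 5 (by decide)
  have h05 := hkey' 0 5 (by decide)
  linarith [h01.1, h12.1, h23.1, h34.1, h45.1, h05.2]

lemma aux_arg (z w : ℂ) (hz : z ≠ 0) (hw : w ≠ 0)
    (hcos : (1:ℝ)/2 ≤ Real.cos (z.arg - w.arg)) :
    ‖z‖ * ‖w‖ ≤ 2 * (z.re * w.re + z.im * w.im) := by
  have hz' : (0:ℝ) < ‖z‖ := norm_pos_iff.mpr hz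
  have hw' : (0:ℝ) < ‖w‖ := norm_pos_iff.mpr hw
  have e : Real.cos (z.arg - w.arg)
      = (z.re * w.re + z.im * w.im) / (‖z‖ * ‖w‖) := by
    rw [Real.cos_sub, Complex.cos_arg hz, Complex.cos_arg hw,
      Complex.sin_arg, Complex.sin_arg]
    field_simp
  rw [e, le_div_iff₀ (by positivity)] at hcos
  nlinarith

noncomputable def toC (v : EuclideanSpace ℝ (Fin 2)) : ℂ := ⟨v 0, v 1⟩

lemma toC_ne (v : EuclideanSpace ℝ (Fin 2)) (hv : v ≠ 0) : toC v ≠ 0 := by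
  intro h
  apply hv
  have h0 : v 0 = 0 := congrArg Complex.re h
  have h1 : v 1 = 0 := congrArg Complex.im h
  ext i
  fin_cases i <;> simpa

lemma toC_abs (v : EuclideanSpace ℝ (Fin 2)) : ‖toC v‖ = ‖v‖ := by
  rw [EuclideanSpace.norm_eq, Complex.norm_def, Complex.normSq_apply, Fin.sum_univ_two]
  simp [toC, sq_abs]
  ring_nf

lemma toC_inner (v w : EuclideanSpace ℝ (Fin 2)) :
    (inner ℝ v w : ℝ) = (toC v).re * (toC w).re + (toC v).im * (toC w).im := by
  rw [PiLp.inner_apply, Fin.sum_univ_two]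
  simp [toC, mul_comm]

/-- In the Euclidean plane, no point `x` of a finite set with distinct
pairwise distances can have five distinct proper children in the nearest
neighbour graph. -/
theorem stmt_4 (X : Finset (EuclideanSpace ℝ (Fin 2)))
    (hdist : ∀ x ∈ X, ∀ y ∈ X, ∀ x' ∈ X, ∀ y' ∈ X, x ≠ y → x' ≠ y' →
      dist x y = dist x' y' →
      ({x, y} : Set (EuclideanSpace ℝ (Fin 2))) = {x', y'})
    (x y : EuclideanSpace ℝ (Fin 2)) (c : Fin 5 → EuclideanSpace ℝ (Fin 2))
    (hx : x ∈ X) (hy : y ∈ X) (hc : ∀ i, c i ∈ X)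
    (hcinj : Function.Injective c) (hcx : ∀ i, c i ≠ x)
    -- `x` is the unique nearest neighbour of each `c i`
    (hnn : ∀ i, ∀ z ∈ X, z ≠ c i → z ≠ x → dist (c i) x < dist (c i) z)
    -- `y` is the unique nearest neighbour of `x`, and is none of the `c i`
    (hyx : y ≠ x)
    (hynn : ∀ z ∈ X, z ≠ x → z ≠ y → dist x y < dist x z)
    (hyc : ∀ i, y ≠ c i) :
    False := by
  classical
  set p : Fin 6 → EuclideanSpace ℝ (Fin 2) := Fin.snoc c y with hp
  have hplast : p (Fin.last 5) = y := by rw [hp]; exact Fin.snoc_last _ _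
  have hpcast : ∀ k : Fin 5, p k.castSucc = c k := by intro k; simp [hp]
  have hpX : ∀ i, p i ∈ X := by
    intro i
    induction i using Fin.lastCases with
    | last => rw [hplast]; exact hy
    | cast k => rw [hpcast]; exact hc k
  have hpx : ∀ i, p i ≠ x := by
    intro i
    induction i using Fin.lastCases with
    | last => rw [hplast]; exact hyx
    | cast k => rw [hpcast]; exact hcx k
  have hpinj : ∀ i j : Fin 6, i ≠ j → p i ≠ p j := by
    intro i j hij
    induction i using Fin.lastCases with
    | last =>
      induction j using Fin.lastCases with
      | last => exact absurd rfl hij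
      | cast k => rw [hplast, hpcast]; exact hyc k
    | cast k =>
      induction j using Fin.lastCases with
      | last => rw [hplast, hpcast]; exact fun h => hyc k h.symm
      | cast l =>
        rw [hpcast, hpcast]
        intro h
        exact hij (congrArg Fin.castSucc (hcinj h))
  -- the vectors from x to the six points
  set v : Fin 6 → EuclideanSpace ℝ (Fin 2) := fun i => p i - x with hv
  have hvne : ∀ i, v i ≠ 0 := fun i => sub_ne_zero.mpr (hpx i)
  have hvnorm : ∀ i, ‖v i‖ = dist x (p i) := by
    intro i; rw [dist_eq_norm, ← norm_neg]; congr 1; simp [hv]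
  -- pigeonhole on angles
  obtain ⟨i, j, hij, hcos⟩ := aux_pigeon (fun i => (toC (v i)).arg)
    (fun i => Complex.arg_mem_Ioc _)
  have hinner : ‖v i‖ * ‖v j‖ ≤ 2 * (inner ℝ (v i) (v j) : ℝ) := by
    rw [← toC_abs, ← toC_abs, toC_inner]
    exact aux_arg _ _ (toC_ne _ (hvne i)) (toC_ne _ (hvne j)) hcos
  -- distinct distances
  have hdne : dist x (p i) ≠ dist x (p j) := by
    intro h
    have := hdist x hx (p i) (hpX i) x hx (p j) (hpX j)
      (fun h' => hpx i h'.symm) (fun h' => hpx j h'.symm) h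
    have hmem : p i ∈ ({x, p j} : Set (EuclideanSpace ℝ (Fin 2))) := by
      rw [← this]; simp
    rcases hmem with h' | h'
    · exact hpx i h'
    · exact hpinj i j hij h'
  -- key claim, for the ordered pair with smaller first
  have key : ∀ a b : Fin 6, a ≠ b → ‖v a‖ * ‖v b‖ ≤ 2 * (inner ℝ (v a) (v b) : ℝ) →
      ‖v a‖ < ‖v b‖ → False := by
    intro a b hab hin hlt
    have hva : 0 < ‖v a‖ := norm_pos_iff.mpr (hvne a)
    have htri : ‖v b - v a‖ < ‖v b‖ := aux_tri _ _ hva hin hlt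
    have hdd : dist (p a) (p b) < dist x (p b) := by
      rw [← hvnorm]
      have : v b - v a = p b - p a := by simp [hv]
      rw [dist_comm, dist_eq_norm, ← this]
      exact htri
    induction b using Fin.lastCases with
    | last =>
      -- larger point is y; smaller is some c k
      induction a using Fin.lastCases with
      | last => exact absurd rfl hab
      | cast k =>
        rw [hvnorm, hvnorm, hplast, hpcast] at hlt
        exact absurd hlt (not_lt.mpr (le_of_lt
          (hynn (c k) (hc k) (hcx k) (fun h => hyc k h.symm))))
    | cast k =>
      rw [hpcast] at hdd
      have := hnn k (p a) (hpX a) (by rw [← hpcast k]; exact hpinj a _ (by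
        intro h; exact hab h)) (hpx a)
      rw [dist_comm (c k) x, dist_comm (c k) (p a)] at this
      exact absurd hdd (not_lt.mpr (le_of_lt this))
  rcases lt_trichotomy (‖v i‖) (‖v j‖) with h | h | h
  · exact key i j hij hinner h
  · rw [hvnorm, hvnorm] at h; exact hdne h
  · exact key j i (Ne.symm hij) (by rwa [real_inner_comm, mul_comm]) h
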